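/- Let U_1,…,U_L be unitary matrices of size N each admitting a decomposition U_j = D(ω^{(j)}) F_N (1 ⊕ Y_j) F_N† D(−φ) with a common right phase vector φ (independent of j). Then the state |ψ^φ⟩ = (1/√N) Σ_k e^{iφ_k}|k⟩ is mutually coherent: for every j and every basis index i, |⟨i| U_j |ψ^φ⟩|² = 1/N. -/

import Mathlib

open Matrix

/-- If each `U_j` decomposes as `D(ω^(j)) F (1 ⊕ Y_j) Fᴴ D(-φ)`
with a common right phase vector `φ` (the block unitary `1 ⊕ Y_j` being encoded
as a unitary `B j` fixing the first basis vector), then the state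
`ψ^φ = (1/√N) Σ_k e^{iφ_k}|k⟩` is mutually coherent: all measurement
probabilities equal `1/N`. -/
theorem stmt5 (N L : ℕ) [NeZero N]
    (F : Matrix (Fin N) (Fin N) ℂ)
    (hF : ∀ k l : Fin N, F k l =
      Complex.exp (2 * Real.pi * Complex.I * (k : ℕ) * (l : ℕ) / N) / (Real.sqrt N : ℂ))
    (B : Fin L → Matrix (Fin N) (Fin N) ℂ)
    (hB : ∀ j, (B j)ᴴ * B j = 1)
    (hBe : ∀ j, (B j).mulVec (Pi.single 0 1) = Pi.single 0 1)
    (ω : Fin L → Fin N → ℝ) (φ : Fin N → ℝ)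
    (U : Fin L → Matrix (Fin N) (Fin N) ℂ)
    (hU : ∀ j, U j =
      Matrix.diagonal (fun k => Complex.exp (Complex.I * (ω j k))) * F * B j * Fᴴ *
        Matrix.diagonal (fun k => Complex.exp (Complex.I * (-(φ k))))) :
    ∀ (j : Fin L) (i : Fin N),
      ‖(U j).mulVec (fun k => ((Real.sqrt N)⁻¹ : ℝ) * Complex.exp (Complex.I * (φ k))) i‖ ^ 2
        = 1 / N := by
  intro j i
  have hN0 : (0:ℝ) < N := Nat.cast_pos.mpr (Nat.pos_of_ne_zero (NeZero.ne N))
  have hsq0 : (0:ℝ) < Real.sqrt N := Real.sqrt_pos.mpr hN0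
  have hsqC : ((Real.sqrt N : ℝ) : ℂ) ≠ 0 := by
    exact_mod_cast hsq0.ne'
  have hNC : (N : ℂ) ≠ 0 := Nat.cast_ne_zero.mpr (NeZero.ne N)
  have hsqmul : ((Real.sqrt N : ℝ) : ℂ) * ((Real.sqrt N : ℝ) : ℂ) = (N : ℂ) := by
    rw [← Complex.ofReal_mul, Real.mul_self_sqrt hN0.le]
    norm_cast
  -- Step 1 : the diagonal phases cancel
  have h1 : (Matrix.diagonal (fun k => Complex.exp (Complex.I * (-(φ k))))).mulVec
      (fun k => ((Real.sqrt N)⁻¹ : ℝ) * Complex.exp (Complex.I * (φ k)))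
      = fun _ => (((Real.sqrt N)⁻¹ : ℝ) : ℂ) := by
    funext k
    rw [Matrix.mulVec_diagonal, mul_comm, mul_assoc, ← Complex.exp_add,
      show Complex.I * ((φ k : ℝ) : ℂ) + Complex.I * -((φ k : ℝ) : ℂ) = 0 by ring,
      Complex.exp_zero, mul_one]
  -- Step 2 : Fᴴ applied to the constant vector gives e₀
  have h2 : Fᴴ.mulVec (fun _ => (((Real.sqrt N)⁻¹ : ℝ) : ℂ)) = Pi.single 0 1 := by
    funext l
    have hconj : ∀ k : Fin N, Fᴴ l k =
        Complex.exp (-(2 * Real.pi * Complex.I * (k : ℕ) * (l : ℕ) / N)) / (Real.sqrt N : ℂ) := by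
      intro k
      have hst : Fᴴ l k = (starRingEnd ℂ) (F k l) := rfl
      rw [hst, hF, map_div₀, ← Complex.exp_conj]
      congr 2
      · simp only [map_div₀, _root_.map_mul, map_ofNat, Complex.conj_I, Complex.conj_ofReal,
          map_natCast]
        ring
      · exact Complex.conj_ofReal _
    rw [Matrix.mulVec]
    simp only [dotProduct, hconj]
    have hterm : ∀ k : Fin N,
        Complex.exp (-(2 * Real.pi * Complex.I * (k : ℕ) * (l : ℕ) / N)) / (Real.sqrt N : ℂ)
          * (((Real.sqrt N)⁻¹ : ℝ) : ℂ)
        = Complex.exp (-(2 * Real.pi * Complex.I * (l : ℕ) / N)) ^ (k:ℕ) / N := by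
      intro k
      have hx : Complex.exp (-(2 * Real.pi * Complex.I * (k : ℕ) * (l : ℕ) / N))
          = Complex.exp (-(2 * Real.pi * Complex.I * (l : ℕ) / N)) ^ (k:ℕ) := by
        rw [← Complex.exp_nat_mul]
        congr 1
        ring
      rw [hx, Complex.ofReal_inv, ← one_div, div_mul_div_comm, mul_one, hsqmul]
    simp only [hterm]
    rw [← Finset.sum_div]
    rw [Fin.sum_univ_eq_sum_range (fun k => Complex.exp (-(2 * Real.pi * Complex.I * (l : ℕ) / N)) ^ k)]
    by_cases hl : l = 0
    · subst hl
      simp only [Fin.val_zero, Nat.cast_zero, mul_zero, zero_div, neg_zero, Complex.exp_zero,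
        one_pow, Finset.sum_const, Finset.card_range, nsmul_eq_mul, mul_one]
      rw [div_self hNC]
      simp
    · have hI : (Complex.I : ℂ) ≠ 0 := Complex.I_ne_zero
      have hpi : ((Real.pi : ℝ) : ℂ) ≠ 0 := by exact_mod_cast Real.pi_ne_zero
      have h2pi : (2 * (Real.pi : ℂ) * Complex.I) ≠ 0 :=
        mul_ne_zero (mul_ne_zero two_ne_zero hpi) hI
      have hne1 : Complex.exp (-(2 * Real.pi * Complex.I * (l : ℕ) / N)) ≠ 1 := by
        intro h
        rw [Complex.exp_eq_one_iff] at h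
        obtain ⟨n, hn⟩ := h
        have hcancel : (2 * (Real.pi : ℂ) * Complex.I) * (-((l:ℕ) : ℂ)) =
            (2 * (Real.pi : ℂ) * Complex.I) * ((n : ℂ) * N) := by
          field_simp at hn
          linear_combination (2 * (Real.pi : ℂ) * Complex.I) * hn
        have hll : -((l:ℕ) : ℂ) = (n : ℂ) * N := mul_left_cancel₀ h2pi hcancel
        have hlz : -((l:ℕ) : ℤ) = n * N := by exact_mod_cast hll
        have hl1 : (1:ℤ) ≤ ((l:ℕ) : ℤ) := by
          exact_mod_cast Nat.pos_of_ne_zero (fun h => hl (Fin.ext h))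
        have hlN : ((l:ℕ) : ℤ) < (N : ℤ) := by exact_mod_cast l.isLt
        have hNz : (0:ℤ) < (N : ℤ) := by exact_mod_cast Nat.pos_of_ne_zero (NeZero.ne N)
        rcases le_or_gt n (-1) with h | h
        · nlinarith [mul_le_mul_of_nonneg_right h hNz.le]
        · have hn0 : (0:ℤ) ≤ n := by omega
          nlinarith [mul_nonneg hn0 hNz.le]
      rw [geom_sum_eq hne1]
      have hpow : Complex.exp (-(2 * Real.pi * Complex.I * (l : ℕ) / N)) ^ N = 1 := by
        rw [← Complex.exp_nat_mul]
        have harg : (N:ℂ) * (-(2 * Real.pi * Complex.I * (l : ℕ) / N)) =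
            ((-(l:ℕ) : ℤ) : ℂ) * (2 * Real.pi * Complex.I) := by
          push_cast
          field_simp
        rw [harg, Complex.exp_int_mul_two_pi_mul_I]
      rw [hpow]
      simp [Pi.single_apply, hl]
  -- assemble
  have key : (U j).mulVec (fun k => ((Real.sqrt N)⁻¹ : ℝ) * Complex.exp (Complex.I * (φ k)))
      = fun i => Complex.exp (Complex.I * (ω j i)) * (((Real.sqrt N)⁻¹ : ℝ) : ℂ) := by
    rw [hU j]
    rw [← Matrix.mulVec_mulVec, h1, ← Matrix.mulVec_mulVec, h2, ← Matrix.mulVec_mulVec, hBe j,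
      ← Matrix.mulVec_mulVec, Matrix.mulVec_single]
    funext k
    rw [Matrix.mulVec_diagonal]
    congr 1
    change F k 0 * 1 = _
    rw [mul_one, hF]
    simp [Complex.ofReal_inv, one_div]
  rw [key]
  rw [norm_mul]
  have hexp : ‖Complex.exp (Complex.I * (ω j i))‖ = 1 := by
    rw [Complex.norm_exp]
    simp [mul_comm]
  rw [hexp, one_mul]
  rw [Complex.norm_real, Real.norm_eq_abs, abs_of_pos (by positivity)]
  rw [inv_pow, Real.sq_sqrt hN0.le, one_div]
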